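/- T₂ = λn λf (((n)f)F)0̲, with F = λx λy (x)(s̲)y, is a storage operator for the integers. -/

import Mathlib

/- Untyped λ-calculus with de Bruijn indices, head reduction, Church numerals. -/

inductive Lam : Type
  | var : ℕ → Lam
  | app : Lam → Lam → Lam
  | lam : Lam → Lam
deriving DecidableEq, Repr

namespace Lam

/-- Shift free variables `≥ c` up by 1. -/
def lift (c : ℕ) : Lam → Lam
  | var n => if n < c then var n else var (n + 1)
  | app s t => app (s.lift c) (t.lift c)
  | lam t => lam (t.lift (c + 1))

/-- Push a substitution under a binder. -/
def up (σ : ℕ → Lam) : ℕ → Lam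
  | 0 => var 0
  | n + 1 => (σ n).lift 0

/-- Capture-avoiding simultaneous substitution. -/
def subst (σ : ℕ → Lam) : Lam → Lam
  | var n => σ n
  | app s t => app (s.subst σ) (t.subst σ)
  | lam t => lam (t.subst (up σ))

/-- `t.subst0 u` is `t[u/0]`, the β-contractum substitution. -/
def subst0 (t u : Lam) : Lam :=
  t.subst (fun n => match n with | 0 => u | n + 1 => var n)

/-- `m` occurs free in the term. -/
def FreeIn (m : ℕ) : Lam → Prop
  | var n => n = m
  | app s t => s.FreeIn m ∨ t.FreeIn m
  | lam t => t.FreeIn (m + 1)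

/-- A closed λ-term. -/
def Closed (t : Lam) : Prop := ∀ m, ¬ t.FreeIn m

end Lam

/-- One-step β-reduction (anywhere in the term). -/
inductive Beta : Lam → Lam → Prop
  | beta (t u) : Beta (.app (.lam t) u) (t.subst0 u)
  | appL {s s'} (t) : Beta s s' → Beta (.app s t) (.app s' t)
  | appR {t t'} (s) : Beta t t' → Beta (.app s t) (.app s t')
  | lam {t t'} : Beta t t' → Beta (.lam t) (.lam t')

/-- β-equivalence `≃β`. -/
def BetaEq : Lam → Lam → Prop := Relation.EqvGen Beta

/-- A term in (β-)normal form. -/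
def NormalForm (t : Lam) : Prop := ∀ u, ¬ Beta t u

/-- One step of head reduction: reduce the head redex. -/
inductive HStep : Lam → Lam → Prop
  | beta (t u) : HStep (.app (.lam t) u) (t.subst0 u)
  | lam {t t'} : HStep t t' → HStep (.lam t) (.lam t')
  | app {t t'} (u) : HStep t t' → (∀ s, t ≠ .lam s) → HStep (.app t u) (.app t' u)

/-- `HRedN k u v` : `u ≻ v` by a head reduction of length `h(u,v) = k`. -/
inductive HRedN : ℕ → Lam → Lam → Prop
  | refl (t) : HRedN 0 t t
  | step {k t u v} : HStep t u → HRedN k u v → HRedN (k + 1) t v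

/-- `u ≻ v` : `v` is obtained from `u` by head reduction. -/
def HRed (t u : Lam) : Prop := ∃ k, HRedN k t u

/-- Head normal form: no head redex. -/
def HeadNormal (t : Lam) : Prop := ∀ u, ¬ HStep t u

/-- Solvable: the head reduction terminates. -/
def Solvable (t : Lam) : Prop := ∃ v, HRed t v ∧ HeadNormal v

/-- `(t)u₁…uₙ` : iterated application. -/
def appList : Lam → List Lam → Lam
  | t, [] => t
  | t, u :: us => appList (t.app u) us

/-- `(f)ⁿ x` with `x = var 1`, `f = var 0`. -/
def churchBody : ℕ → Lam
  | 0 => .var 1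
  | n + 1 => .app (.var 0) (churchBody n)

/-- Church numeral `n̲ = λx λf (f)ⁿ x`. -/
def church (n : ℕ) : Lam := .lam (.lam (churchBody n))

/-- `0̲ = λx λf x`. -/
def czero : Lam := .lam (.lam (.var 1))

/-- `s̲ = λn λx λf (f)((n)x)f`. -/
def csucc : Lam := .lam (.lam (.lam (.app (.var 0) (.app (.app (.var 2) (.var 1)) (.var 0)))))

/-- `(s̲)ⁿ 0̲`. -/
def succIter : ℕ → Lam
  | 0 => czero
  | n + 1 => .app csucc (succIter n)

/-- `G = λx λy (x) λz (y)(s̲)z`. -/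
def Gop : Lam := .lam (.lam (.app (.var 1) (.lam (.app (.var 1) (.app csucc (.var 0))))))

/-- `δ = λf (f)0̲`. -/
def deltaOp : Lam := .lam (.app (.var 0) czero)

/-- `T₁ = λn ((n)δ)G`. -/
def T1 : Lam := .lam (.app (.app (.var 0) deltaOp) Gop)

/-- `F = λx λy (x)(s̲)y`. -/
def Fop : Lam := .lam (.lam (.app (.var 1) (.app csucc (.var 0))))

/-- `T₂ = λn λf (((n)f)F)0̲`. -/
def T2 : Lam := .lam (.lam (.app (.app (.app (.var 1) (.var 0)) Fop) czero))

/-- `θ₀ = λx λf λz (x)(λd z)(λx x)`. -/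
def theta0 : Lam := .lam (.lam (.lam (.app (.app (.var 2) (.lam (.var 1))) (.lam (.var 0)))))

/-- `T` is a storage operator for the integers (the fixed variable `f` is `var 0`). -/
def IsStorage (T : Lam) : Prop :=
  ∀ n : ℕ, ∃ τ : Lam, BetaEq τ (church n) ∧
    ∀ θ : Lam, BetaEq θ (church n) →
      ∃ σ : ℕ → Lam, HRed (.app (.app T θ) (.var 0)) (.app (.var 0) (τ.subst σ))


/-! ### Auxiliary development -/

namespace Lam

lemma lift_lift (t : Lam) : ∀ c d, d ≤ c → (t.lift c).lift d = (t.lift d).lift (c+1) := by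
  induction t with
  | var n =>
    intro c d h
    simp only [lift]
    split_ifs <;> simp only [lift] <;> split_ifs <;> first | rfl | omega
  | app s t ihs iht =>
    intro c d h
    simp only [lift, ihs c d h, iht c d h]
  | lam t ih =>
    intro c d h
    simp only [lift, ih (c+1) (d+1) (by omega)]

lemma lift_subst (t : Lam) : ∀ (σ : ℕ → Lam) c,
    (t.subst σ).lift c = t.subst (fun n => (σ n).lift c) := by
  induction t with
  | var n => intro σ c; rfl
  | app s t ihs iht => intro σ c; simp only [subst, lift, ihs, iht]
  | lam t ih =>
    intro σ c
    simp only [subst, lift, ih]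
    have : (up fun n => lift c (σ n)) = fun n => lift (c+1) (up σ n) := by
      funext n
      cases n with
      | zero => simp [up, lift]
      | succ n => simp only [up]; exact (lift_lift (σ n) c 0 (Nat.zero_le c))
    rw [this]

lemma subst_lift (t : Lam) : ∀ (σ : ℕ → Lam) c,
    (t.lift c).subst σ = t.subst (fun n => if n < c then σ n else σ (n+1)) := by
  induction t with
  | var n =>
    intro σ c
    simp only [lift]
    split_ifs with h <;> simp only [subst] <;> simp [h]
  | app s t ihs iht => intro σ c; simp only [subst, lift, ihs, iht]
  | lam t ih =>
    intro σ c
    simp only [subst, lift, ih]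
    have : (fun n => if n < c + 1 then up σ n else up σ (n+1)) = up (fun n => if n < c then σ n else σ (n+1)) := by
      funext n
      cases n with
      | zero => simp [up]
      | succ n =>
        simp only [up]
        by_cases h : n < c
        · simp [Nat.succ_lt_succ h, h]
        · simp [h, fun hh => h (Nat.lt_of_succ_lt_succ hh)]
    rw [this]

lemma subst_subst (t : Lam) : ∀ (σ τ : ℕ → Lam),
    (t.subst σ).subst τ = t.subst (fun n => (σ n).subst τ) := by
  induction t with
  | var n => intro σ τ; rfl
  | app s t ihs iht => intro σ τ; simp only [subst, ihs, iht]
  | lam t ih =>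
    intro σ τ
    simp only [subst, ih]
    have : (up fun n => subst τ (σ n)) = fun n => subst (up τ) (up σ n) := by
      funext n
      cases n with
      | zero => rfl
      | succ n =>
        simp only [up]
        rw [lift_subst, subst_lift]
        have : (fun n => if n < 0 then up τ n else up τ (n+1)) = fun n => lift 0 (τ n) := by
          funext m; simp [up]
        rw [this]
    rw [this]

lemma subst_var (t : Lam) : t.subst (fun n => var n) = t := by
  induction t with
  | var n => rfl
  | app s t ihs iht => simp only [subst, ihs, iht]
  | lam t ih =>
    simp only [subst]
    congr 1
    have : up (fun n => var n) = fun n => var n := by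
      funext n; cases n <;> simp [up, lift]
    rw [this, ih]

lemma subst0_lift (t u : Lam) : (t.lift 0).subst0 u = t := by
  rw [subst0, subst_lift]
  have : (fun n => if n < 0 then (match n with | 0 => u | n + 1 => var n) else (match n+1 with | 0 => u | n + 1 => var n)) = fun n => var n := by
    funext n; simp
  rw [this, subst_var]

lemma subst_subst0 (t u : Lam) (σ : ℕ → Lam) :
    (t.subst0 u).subst σ = (t.subst (up σ)).subst0 (u.subst σ) := by
  simp only [subst0, subst_subst]
  congr 1
  funext n
  cases n with
  | zero => rfl
  | succ n => simp only [up]; exact (subst0_lift (σ n) (u.subst σ)).symm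

lemma lift_subst0 (t u : Lam) (c : ℕ) :
    (t.subst0 u).lift c = (t.lift (c+1)).subst0 (u.lift c) := by
  simp only [subst0, lift_subst, subst_lift]
  congr 1
  funext n
  cases n with
  | zero => simp
  | succ n =>
    by_cases h : n < c
    · simp [h, Nat.succ_lt_succ h, lift]
    · simp [h, fun hh => h (Nat.lt_of_succ_lt_succ hh), lift]

end Lam


/-! ### Beta reduction machinery -/

/-- Multi-step β-reduction. -/
def Red : Lam → Lam → Prop := Relation.ReflTransGen Beta

lemma Beta.subst {t t' : Lam} (h : Beta t t') (σ : ℕ → Lam) :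
    Beta (t.subst σ) (t'.subst σ) := by
  induction h generalizing σ with
  | beta t u => rw [Lam.subst_subst0]; exact Beta.beta _ _
  | appL t _ ih => exact Beta.appL _ (ih σ)
  | appR s _ ih => exact Beta.appR _ (ih σ)
  | lam _ ih => exact Beta.lam (ih (Lam.up σ))

lemma Red.subst {t t' : Lam} (h : Red t t') (σ : ℕ → Lam) :
    Red (t.subst σ) (t'.subst σ) := by
  induction h with
  | refl => exact Relation.ReflTransGen.refl
  | tail _ hb ih => exact ih.tail (hb.subst σ)

lemma Red.appL {t t' : Lam} (u : Lam) (h : Red t t') : Red (.app t u) (.app t' u) := by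
  induction h with
  | refl => exact Relation.ReflTransGen.refl
  | tail _ hb ih => exact ih.tail (Beta.appL _ hb)

lemma Red.appR {t t' : Lam} (u : Lam) (h : Red t t') : Red (.app u t) (.app u t') := by
  induction h with
  | refl => exact Relation.ReflTransGen.refl
  | tail _ hb ih => exact ih.tail (Beta.appR _ hb)

lemma Red.lamCong {t t' : Lam} (h : Red t t') : Red (.lam t) (.lam t') := by
  induction h with
  | refl => exact Relation.ReflTransGen.refl
  | tail _ hb ih => exact ih.tail (Beta.lam hb)

lemma Red.betaEq {t t' : Lam} (h : Red t t') : BetaEq t t' := by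
  induction h with
  | refl => exact Relation.EqvGen.refl _
  | tail _ hb ih => exact Relation.EqvGen.trans _ _ _ ih (Relation.EqvGen.rel _ _ hb)

/-! ### Parallel reduction and confluence -/

/-- Parallel reduction. -/
inductive Par : Lam → Lam → Prop
  | var (n) : Par (.var n) (.var n)
  | app {s s' t t'} : Par s s' → Par t t' → Par (.app s t) (.app s' t')
  | lam {t t'} : Par t t' → Par (.lam t) (.lam t')
  | beta {s s' t t'} : Par s s' → Par t t' → Par (.app (.lam s) t) (s'.subst0 t')

lemma Par.refl (t : Lam) : Par t t := by
  induction t with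
  | var n => exact Par.var n
  | app s t ihs iht => exact Par.app ihs iht
  | lam t ih => exact Par.lam ih

lemma Par.of_beta {t t' : Lam} (h : Beta t t') : Par t t' := by
  induction h with
  | beta t u => exact Par.beta (Par.refl t) (Par.refl u)
  | appL t _ ih => exact Par.app ih (Par.refl t)
  | appR s _ ih => exact Par.app (Par.refl s) ih
  | lam _ ih => exact Par.lam ih

lemma Par.red {t t' : Lam} (h : Par t t') : Red t t' := by
  induction h with
  | var n => exact Relation.ReflTransGen.refl
  | app _ _ ihs iht => exact (Red.appL _ ihs).trans (Red.appR _ iht)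
  | lam _ ih => exact Red.lamCong ih
  | beta _ _ ihs iht =>
    refine Relation.ReflTransGen.tail ?_ (Beta.beta _ _)
    exact ((Red.appL _ (Red.lamCong ihs)).trans (Red.appR _ iht))

lemma Par.lift {t t' : Lam} (h : Par t t') : ∀ c, Par (t.lift c) (t'.lift c) := by
  induction h with
  | var n => intro c; simp only [Lam.lift]; split_ifs <;> exact Par.refl _
  | app _ _ ihs iht => intro c; exact Par.app (ihs c) (iht c)
  | lam _ ih => intro c; exact Par.lam (ih (c+1))
  | beta _ _ ihs iht =>
    intro c
    rw [Lam.lift_subst0]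
    exact Par.beta (ihs (c+1)) (iht c)

lemma Par.subst {t t' : Lam} (h : Par t t') :
    ∀ {σ σ' : ℕ → Lam}, (∀ n, Par (σ n) (σ' n)) → Par (t.subst σ) (t'.subst σ') := by
  induction h with
  | var n => intro σ σ' hσ; exact hσ n
  | app _ _ ihs iht => intro σ σ' hσ; exact Par.app (ihs hσ) (iht hσ)
  | lam _ ih =>
    intro σ σ' hσ
    refine Par.lam (ih ?_)
    intro n
    cases n with
    | zero => exact Par.refl _
    | succ n => exact (hσ n).lift 0
  | beta _ _ ihs iht =>
    intro σ σ' hσ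
    rw [Lam.subst_subst0]
    refine Par.beta (ihs ?_) (iht hσ)
    intro n
    cases n with
    | zero => exact Par.refl _
    | succ n => exact (hσ n).lift 0

lemma Par.subst0 {t t' u u' : Lam} (ht : Par t t') (hu : Par u u') :
    Par (t.subst0 u) (t'.subst0 u') := by
  refine ht.subst ?_
  intro n
  cases n with
  | zero => exact hu
  | succ n => exact Par.refl _

/-- Complete development. -/
def cd : Lam → Lam
  | .var n => .var n
  | .lam t => .lam (cd t)
  | .app (.var n) t => .app (.var n) (cd t)
  | .app (.app a b) t => .app (cd (.app a b)) (cd t)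
  | .app (.lam s) t => (cd s).subst0 (cd t)

lemma Par.triangle {t u : Lam} (h : Par t u) : Par u (cd t) := by
  induction h with
  | var n => exact Par.var n
  | lam _ ih => exact Par.lam ih
  | beta _ _ ihs iht => exact Par.subst0 ihs iht
  | @app s s' t t' hs ht ihs iht =>
    cases s with
    | var n =>
      cases hs
      exact Par.app (Par.var n) iht
    | app a b => exact Par.app ihs iht
    | lam s0 =>
      cases hs with
      | lam hs0 =>
        cases ihs with
        | lam ih0 => exact Par.beta ih0 iht


lemma par_diamond {a b c : Lam} (h1 : Par a b) (h2 : Par a c) :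
    ∃ d, Par b d ∧ Par c d := ⟨cd a, h1.triangle, h2.triangle⟩

/-- Multi-step parallel reduction. -/
def Pars : Lam → Lam → Prop := Relation.ReflTransGen Par

lemma pars_strip {a b c : Lam} (h1 : Par a b) (h2 : Pars a c) :
    ∃ d, Pars b d ∧ Par c d := by
  induction h2 with
  | refl => exact ⟨b, Relation.ReflTransGen.refl, h1⟩
  | @tail m n _ hmn ih =>
    obtain ⟨d, hbd, hmd⟩ := ih
    obtain ⟨e, hde, hne⟩ := par_diamond hmd hmn
    exact ⟨e, hbd.tail hde, hne⟩

lemma pars_conf {a b c : Lam} (h1 : Pars a b) (h2 : Pars a c) :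
    ∃ d, Pars b d ∧ Pars c d := by
  induction h1 with
  | refl => exact ⟨c, h2, Relation.ReflTransGen.refl⟩
  | @tail m n _ hmn ih =>
    obtain ⟨d, hmd, hcd⟩ := ih
    obtain ⟨e, hne, hde⟩ := pars_strip hmn hmd
    exact ⟨e, hne, hcd.tail hde⟩

lemma pars_iff_red {a b : Lam} : Pars a b ↔ Red a b := by
  constructor
  · intro h
    induction h with
    | refl => exact Relation.ReflTransGen.refl
    | tail _ hp ih => exact ih.trans hp.red
  · intro h
    exact Relation.ReflTransGen.lift id (fun _ _ hh => Par.of_beta hh) _ _ h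

lemma red_conf {a b c : Lam} (h1 : Red a b) (h2 : Red a c) :
    ∃ d, Red b d ∧ Red c d := by
  obtain ⟨d, h3, h4⟩ := pars_conf (pars_iff_red.2 h1) (pars_iff_red.2 h2)
  exact ⟨d, pars_iff_red.1 h3, pars_iff_red.1 h4⟩

lemma betaEq_join {a b : Lam} (h : BetaEq a b) : ∃ d, Red a d ∧ Red b d := by
  induction h with
  | rel x y hxy => exact ⟨y, Relation.ReflTransGen.single hxy, Relation.ReflTransGen.refl⟩
  | refl x => exact ⟨x, Relation.ReflTransGen.refl, Relation.ReflTransGen.refl⟩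
  | symm x y _ ih => obtain ⟨d, h1, h2⟩ := ih; exact ⟨d, h2, h1⟩
  | trans x y z _ _ ih1 ih2 =>
    obtain ⟨d1, hx, hy1⟩ := ih1
    obtain ⟨d2, hy2, hz⟩ := ih2
    obtain ⟨e, he1, he2⟩ := red_conf hy1 hy2
    exact ⟨e, hx.trans he1, hz.trans he2⟩

/-! ### Church numerals are normal forms -/

lemma churchBody_nf (n : ℕ) : ∀ u, ¬ Beta (churchBody n) u := by
  induction n with
  | zero => intro u h; cases h
  | succ n ih =>
    intro u h
    cases h with
    | appL _ h0 => cases h0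
    | appR _ h0 => exact ih _ h0

lemma church_nf (n : ℕ) : ∀ u, ¬ Beta (church n) u := by
  intro u h
  cases h with
  | lam h1 =>
    cases h1 with
    | lam h2 => exact churchBody_nf n _ h2

lemma red_church {n : ℕ} {u : Lam} (h : Red (church n) u) : u = church n := by
  rcases h.cases_head with h | ⟨c, hc, _⟩
  · exact h.symm
  · exact absurd hc (church_nf n c)

lemma red_of_betaEq_church {θ : Lam} {n : ℕ} (h : BetaEq θ (church n)) :
    Red θ (church n) := by
  obtain ⟨d, h1, h2⟩ := betaEq_join h
  rwa [red_church h2] at h1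


/-! ### Weak head reduction and standardization (Kashima style) -/

/-- Weak head step. -/
inductive WH : Lam → Lam → Prop
  | beta (t u) : WH (.app (.lam t) u) (t.subst0 u)
  | app {t t'} (u) : WH t t' → WH (.app t u) (.app t' u)

/-- Many weak head steps. -/
def WHs : Lam → Lam → Prop := Relation.ReflTransGen WH

lemma WH.src_app {t u : Lam} (h : WH t u) : ∃ a b, t = .app a b := by
  cases h with
  | beta t u => exact ⟨_, _, rfl⟩
  | app u _ => exact ⟨_, _, rfl⟩

lemma WH.hstep {t u : Lam} (h : WH t u) : HStep t u := by
  induction h with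
  | beta t u => exact HStep.beta t u
  | @app t t' u h ih =>
    refine HStep.app u ih ?_
    obtain ⟨a, b, rfl⟩ := h.src_app
    intro s hs; cases hs

lemma WH.toBeta {t u : Lam} (h : WH t u) : Beta t u := by
  induction h with
  | beta t u => exact Beta.beta t u
  | app u _ ih => exact Beta.appL u ih

lemma WHs.red {t u : Lam} (h : WHs t u) : Red t u :=
  Relation.ReflTransGen.lift id (fun _ _ hh => WH.toBeta hh) _ _ h

lemma WH.subst {t u : Lam} (h : WH t u) (σ : ℕ → Lam) : WH (t.subst σ) (u.subst σ) := by
  induction h generalizing σ with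
  | beta t u => rw [Lam.subst_subst0]; exact WH.beta _ _
  | app u _ ih => exact WH.app _ (ih σ)

lemma WHs.subst {t u : Lam} (h : WHs t u) (σ : ℕ → Lam) : WHs (t.subst σ) (u.subst σ) := by
  induction h with
  | refl => exact Relation.ReflTransGen.refl
  | tail _ hw ih => exact ih.tail (hw.subst σ)

lemma WH.lift {t u : Lam} (h : WH t u) (c : ℕ) : WH (t.lift c) (u.lift c) := by
  induction h generalizing c with
  | beta t u => rw [Lam.lift_subst0]; exact WH.beta _ _
  | app u _ ih => exact WH.app _ (ih c)

lemma WHs.lift {t u : Lam} (h : WHs t u) (c : ℕ) : WHs (t.lift c) (u.lift c) := by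
  induction h with
  | refl => exact Relation.ReflTransGen.refl
  | tail _ hw ih => exact ih.tail (hw.lift c)

lemma WHs.appCong {t t' : Lam} (u : Lam) (h : WHs t t') : WHs (.app t u) (.app t' u) := by
  induction h with
  | refl => exact Relation.ReflTransGen.refl
  | tail _ hw ih => exact ih.tail (WH.app u hw)

lemma HRedN.snoc {k : ℕ} {t u v : Lam} (h : HRedN k t u) (h2 : HStep u v) :
    HRedN (k+1) t v := by
  induction h with
  | refl t => exact HRedN.step h2 (HRedN.refl _)
  | step h1 _ ih => exact HRedN.step h1 (ih h2)

lemma WHs.hred {t u : Lam} (h : WHs t u) : HRed t u := by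
  induction h with
  | refl => exact ⟨0, HRedN.refl t⟩
  | tail _ hw ih =>
    obtain ⟨k, hk⟩ := ih
    exact ⟨k + 1, hk.snoc hw.hstep⟩

/-- Standard reduction. -/
inductive St : Lam → Lam → Prop
  | var {t : Lam} (n) : WHs t (.var n) → St t (.var n)
  | app {t u v u' v' : Lam} : WHs t (.app u v) → St u u' → St v v' → St t (.app u' v')
  | lam {t u u' : Lam} : WHs t (.lam u) → St u u' → St t (.lam u')

lemma St.refl (t : Lam) : St t t := by
  induction t with
  | var n => exact St.var n Relation.ReflTransGen.refl
  | app s t ihs iht => exact St.app Relation.ReflTransGen.refl ihs iht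
  | lam t ih => exact St.lam Relation.ReflTransGen.refl ih

lemma St.whs_trans {s t u : Lam} (h1 : WHs s t) (h2 : St t u) : St s u := by
  cases h2 with
  | var n hw => exact St.var n (h1.trans hw)
  | app hw ha hb => exact St.app (h1.trans hw) ha hb
  | lam hw ha => exact St.lam (h1.trans hw) ha

lemma St.red {t u : Lam} (h : St t u) : Red t u := by
  induction h with
  | var n hw => exact hw.red
  | app hw _ _ iha ihb =>
    exact hw.red.trans ((Red.appL _ iha).trans (Red.appR _ ihb))
  | lam hw _ ih => exact hw.red.trans (Red.lamCong ih)

lemma St.lift {t u : Lam} (h : St t u) : ∀ c, St (t.lift c) (u.lift c) := by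
  induction h with
  | var n hw =>
    intro c
    have := hw.lift c
    simp only [Lam.lift] at this ⊢
    split_ifs at this ⊢ <;> exact St.var _ this
  | app hw _ _ iha ihb =>
    intro c
    exact St.app (by simpa [Lam.lift] using hw.lift c) (iha c) (ihb c)
  | lam hw _ ih =>
    intro c
    exact St.lam (by simpa [Lam.lift] using hw.lift c) (ih (c+1))

lemma St.subst {t u : Lam} (h : St t u) :
    ∀ {σ σ' : ℕ → Lam}, (∀ n, St (σ n) (σ' n)) → St (t.subst σ) (u.subst σ') := by
  induction h with
  | @var t n hw =>
    intro σ σ' hσ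
    exact St.whs_trans (by simpa [Lam.subst] using hw.subst σ) (hσ n)
  | app hw _ _ iha ihb =>
    intro σ σ' hσ
    exact St.app (by simpa [Lam.subst] using hw.subst σ) (iha hσ) (ihb hσ)
  | lam hw _ ih =>
    intro σ σ' hσ
    refine St.lam (by simpa [Lam.subst] using hw.subst σ) (ih ?_)
    intro n
    cases n with
    | zero => exact St.refl _
    | succ n => exact (hσ n).lift 0


lemma St.subst0 {t u t' u' : Lam} (ht : St t t') (hu : St u u') :
    St (t.subst0 u) (t'.subst0 u') := by
  refine ht.subst ?_
  intro n
  cases n with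
  | zero => exact hu
  | succ n => exact St.refl _

/-- Main standardization step: standard reduction absorbs β-steps on the right. -/
lemma St.beta_right {t u v : Lam} (h : St t u) (hb : Beta u v) : St t v := by
  induction h generalizing v with
  | var n hw => cases hb
  | @app t a b a' b' hw ha hb' iha ihb =>
    cases hb with
    | beta s w =>
      -- a' = lam s, v = s.subst0 b'
      cases ha with
      | lam hwa ha1 =>
        refine St.whs_trans ?_ (St.subst0 ha1 hb')
        refine (hw.trans ((hwa.appCong b).trans ?_))
        exact Relation.ReflTransGen.single (WH.beta _ _)
    | appL w hL => exact St.app hw (iha hL) hb'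
    | appR w hR => exact St.app hw ha (ihb hR)
  | lam hw ha ih =>
    cases hb with
    | lam hb1 => exact St.lam hw (ih hb1)

lemma St.of_red {t u : Lam} (h : Red t u) : St t u := by
  induction h with
  | refl => exact St.refl t
  | tail _ hb ih => exact ih.beta_right hb

/-- Extraction: reduction to a variable. -/
lemma red_var_whs {t : Lam} {n : ℕ} (h : Red t (.var n)) : WHs t (.var n) := by
  cases St.of_red h with
  | var _ hw => exact hw

/-- Extraction: reduction to an abstraction. -/
lemma red_lam_whs {t s : Lam} (h : Red t (.lam s)) :
    ∃ s', WHs t (.lam s') ∧ Red s' s := by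
  cases St.of_red h with
  | lam hw h1 => exact ⟨_, hw, h1.red⟩

/-- Extraction: reduction to an application with variable head. -/
lemma red_app_var_whs {t c : Lam} {k : ℕ} (h : Red t (.app (.var k) c)) :
    ∃ c1 c2, WHs t (.app c1 c2) ∧ WHs c1 (.var k) ∧ Red c2 c := by
  cases St.of_red h with
  | app hw h1 h2 =>
    cases h1 with
    | var _ hw1 => exact ⟨_, _, hw, hw1, h2.red⟩


/-! ### Computations with Church numerals and the operators -/

/-- `iterApp f n x = (f)ⁿ x`. -/
def iterApp (f : Lam) : ℕ → Lam → Lam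
  | 0, x => x
  | n + 1, x => .app f (iterApp f n x)

lemma churchBody_eq (n : ℕ) : churchBody n = iterApp (.var 0) n (.var 1) := by
  induction n with
  | zero => rfl
  | succ n ih => simp only [churchBody, iterApp, ih]

lemma iterApp_subst (f : Lam) (n : ℕ) (x : Lam) (σ : ℕ → Lam) :
    (iterApp f n x).subst σ = iterApp (f.subst σ) n (x.subst σ) := by
  induction n with
  | zero => rfl
  | succ n ih => simp only [iterApp, Lam.subst, ih]

lemma churchBody_subst (n : ℕ) (σ : ℕ → Lam) :
    (churchBody n).subst σ = iterApp (σ 0) n (σ 1) := by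
  rw [churchBody_eq, iterApp_subst]; rfl

lemma czero_subst (σ : ℕ → Lam) : czero.subst σ = czero := rfl

lemma csucc_subst (σ : ℕ → Lam) : csucc.subst σ = csucc := rfl

lemma Fop_subst (σ : ℕ → Lam) : Fop.subst σ = Fop := rfl

lemma church_subst (n : ℕ) (σ : ℕ → Lam) : (church n).subst σ = church n := by
  simp only [church, Lam.subst]
  rw [churchBody_subst]
  have h0 : Lam.up (Lam.up σ) 0 = .var 0 := rfl
  have h1 : Lam.up (Lam.up σ) 1 = .var 1 := rfl
  rw [h0, h1, ← churchBody_eq]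

lemma lift_as_subst (t : Lam) : ∀ c, t.lift c = t.subst (fun m => if m < c then .var m else .var (m+1)) := by
  induction t with
  | var n => intro c; simp only [Lam.lift, Lam.subst]
  | app s t ihs iht => intro c; simp only [Lam.lift, Lam.subst, ihs, iht]
  | lam t ih =>
    intro c
    simp only [Lam.lift, Lam.subst, ih]
    have : (fun m => if m < c + 1 then Lam.var m else Lam.var (m + 1))
        = Lam.up (fun m => if m < c then Lam.var m else Lam.var (m + 1)) := by
      funext m
      cases m with
      | zero => simp [Lam.up]
      | succ m =>
        simp only [Lam.up]
        by_cases h : m < c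
        · simp [h, Nat.succ_lt_succ h, Lam.lift]
        · simp [h, fun hh => h (Nat.lt_of_succ_lt_succ hh), Lam.lift]
    rw [this]

lemma church_lift (n : ℕ) (c : ℕ) : (church n).lift c = church n := by
  rw [lift_as_subst, church_subst]

lemma red_csucc_church (n : ℕ) : Red (.app csucc (church n)) (church (n+1)) := by
  have e1 : (Lam.lam (.lam (.app (.var 0) (.app (.app (.var 2) (.var 1)) (.var 0))))).subst0
        (church n)
      = .lam (.lam (.app (.var 0) (.app (.app (((church n).lift 0).lift 0) (.var 1)) (.var 0)))) :=
    rfl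
  have s1 : Beta (.app csucc (church n))
      (.lam (.lam (.app (.var 0) (.app (.app (church n) (.var 1)) (.var 0))))) := by
    have h := Beta.beta
      (.lam (.lam (.app (.var 0) (.app (.app (.var 2) (.var 1)) (.var 0))))) (church n)
    rw [e1, church_lift, church_lift] at h
    exact h
  have e2 : (Lam.lam (churchBody n)).subst0 (.var 1) = .lam (iterApp (.var 0) n (.var 2)) := by
    simp only [Lam.subst0, Lam.subst]
    rw [churchBody_subst]
    rfl
  have s2 : Beta (.lam (.lam (.app (.var 0) (.app (.app (church n) (.var 1)) (.var 0)))))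
      (.lam (.lam (.app (.var 0) (.app (.lam (iterApp (.var 0) n (.var 2))) (.var 0))))) := by
    refine Beta.lam (Beta.lam (Beta.appR _ (Beta.appL _ ?_)))
    have h := Beta.beta (.lam (churchBody n)) (.var 1)
    rw [e2] at h
    exact h
  have e3 : (iterApp (.var 0) n (.var 2)).subst0 (.var 0) = churchBody n := by
    rw [Lam.subst0, iterApp_subst, churchBody_eq]
    rfl
  have s3 : Beta (.lam (.lam (.app (.var 0) (.app (.lam (iterApp (.var 0) n (.var 2))) (.var 0)))))
      (church (n+1)) := by
    refine Beta.lam (Beta.lam (Beta.appR _ ?_))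
    have h := Beta.beta (iterApp (.var 0) n (.var 2)) (.var 0)
    rw [e3] at h
    exact h
  exact ((Relation.ReflTransGen.single s1).tail s2).tail s3

lemma red_succIter_church (n : ℕ) : Red (succIter n) (church n) := by
  induction n with
  | zero => exact Relation.ReflTransGen.refl
  | succ n ih =>
    exact (Red.appR csucc ih).trans (red_csucc_church n)


/-! ### The core computation -/

/-- `succAdd n W = (s̲)ⁿ` accumulated onto `W`. -/
def succAdd : ℕ → Lam → Lam
  | 0, W => W
  | n + 1, W => succAdd n (.app csucc W)

lemma succAdd_csucc (n : ℕ) (W : Lam) :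
    succAdd n (.app csucc W) = .app csucc (succAdd n W) := by
  induction n generalizing W with
  | zero => rfl
  | succ n ih => simp only [succAdd, ih]

lemma succAdd_czero (n : ℕ) : succAdd n czero = succIter n := by
  induction n with
  | zero => rfl
  | succ n ih =>
    show succAdd n (.app csucc czero) = _
    rw [succAdd_csucc, ih]
    rfl

lemma core (n : ℕ) : ∀ (b W : Lam) (σ : ℕ → Lam), Red b (churchBody n) →
    σ 0 = Fop → σ 1 = .var 0 →
    WHs (.app (b.subst σ) W) (.app (.var 0) (succAdd n W)) := by
  induction n with
  | zero =>
    intro b W σ hb h0 h1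
    have hw : WHs b (.var 1) := red_var_whs hb
    have hw2 : WHs (b.subst σ) (.var 0) := by
      have := hw.subst σ
      simpa [Lam.subst, h1] using this
    exact hw2.appCong W
  | succ n ih =>
    intro b W σ hb h0 h1
    obtain ⟨c1, c2, h2, h3, h4⟩ := red_app_var_whs (t := b) (c := churchBody n) (k := 0) hb
    have w1 : WHs (.app (b.subst σ) W) (.app (.app (c1.subst σ) (c2.subst σ)) W) := by
      have := h2.subst σ
      simp only [Lam.subst] at this
      exact this.appCong W
    have w2 : WHs (c1.subst σ) Fop := by
      have := h3.subst σ
      simpa [Lam.subst, h0] using this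
    have w3 : WHs (.app (.app (c1.subst σ) (c2.subst σ)) W)
        (.app (.app Fop (c2.subst σ)) W) := (w2.appCong (c2.subst σ)).appCong W
    have e4 : (Lam.lam (.app (.var 1) (.app csucc (.var 0)))).subst0 (c2.subst σ)
        = .lam (.app ((c2.subst σ).lift 0) (.app csucc (.var 0))) := rfl
    have w4 : WH (.app (.app Fop (c2.subst σ)) W)
        (.app (.lam (.app ((c2.subst σ).lift 0) (.app csucc (.var 0)))) W) := by
      refine WH.app W ?_
      have h := WH.beta (Lam.lam (.app (.var 1) (.app csucc (.var 0)))) (c2.subst σ)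
      rwa [e4] at h
    have e5 : (Lam.app ((c2.subst σ).lift 0) (.app csucc (.var 0))).subst0 W
        = .app (c2.subst σ) (.app csucc W) := by
      show Lam.app (((c2.subst σ).lift 0).subst0 W) ((Lam.app csucc (.var 0)).subst0 W) = _
      rw [Lam.subst0_lift]
      rfl
    have w5 : WH (.app (.lam (.app ((c2.subst σ).lift 0) (.app csucc (.var 0)))) W)
        (.app (c2.subst σ) (.app csucc W)) := by
      have h := WH.beta (Lam.app ((c2.subst σ).lift 0) (.app csucc (.var 0))) W
      rwa [e5] at h
    have w6 := ih c2 (.app csucc W) σ h4 h0 h1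
    exact ((((w1.trans w3).tail w4).tail w5).trans w6)

lemma T2_machine {θ : Lam} {n : ℕ} (hred : Red θ (church n)) :
    WHs (.app (.app T2 θ) (.var 0)) (.app (.var 0) (succIter n)) := by
  -- unfold T2 with two β-steps
  have e6 : (Lam.lam (.app (.app (.app (.var 1) (.var 0)) Fop) czero)).subst0 θ
      = .lam (.app (.app (.app (θ.lift 0) (.var 0)) Fop) czero) := rfl
  have w1 : WH (.app (.app T2 θ) (.var 0))
      (.app (.lam (.app (.app (.app (θ.lift 0) (.var 0)) Fop) czero)) (.var 0)) := by
    refine WH.app _ ?_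
    have h := WH.beta (Lam.lam (.app (.app (.app (.var 1) (.var 0)) Fop) czero)) θ
    rwa [e6] at h
  have e7 : (Lam.app (.app (.app (θ.lift 0) (.var 0)) Fop) czero).subst0 (.var 0)
      = .app (.app (.app θ (.var 0)) Fop) czero := by
    show Lam.app (.app (.app ((θ.lift 0).subst0 (.var 0)) ((Lam.var 0).subst0 (.var 0)))
      (Fop.subst0 (.var 0))) (czero.subst0 (.var 0)) = _
    rw [Lam.subst0_lift]
    rfl
  have w2 : WH (.app (.lam (.app (.app (.app (θ.lift 0) (.var 0)) Fop) czero)) (.var 0))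
      (.app (.app (.app θ (.var 0)) Fop) czero) := by
    have h := WH.beta (Lam.app (.app (.app (θ.lift 0) (.var 0)) Fop) czero) (.var 0)
    rwa [e7] at h
  -- θ head reduces to an abstraction
  have hred' : Red θ (.lam (.lam (churchBody n))) := hred
  obtain ⟨b0, hb0, hb0r⟩ := red_lam_whs hred'
  have w3 : WHs (.app (.app (.app θ (.var 0)) Fop) czero)
      (.app (.app (.app (.lam b0) (.var 0)) Fop) czero) :=
    ((hb0.appCong _).appCong _).appCong _
  have w4 : WH (.app (.app (.app (.lam b0) (.var 0)) Fop) czero)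
      (.app (.app (b0.subst0 (.var 0)) Fop) czero) :=
    WH.app _ (WH.app _ (WH.beta b0 (.var 0)))
  -- the body after substituting the outer f
  have e8 : (Lam.lam (churchBody n)).subst0 (.var 0) = .lam (churchBody n) := by
    simp only [Lam.subst0, Lam.subst]
    congr 1
    rw [churchBody_subst, show (Lam.up fun k => match k with | 0 => Lam.var 0 | k+1 => Lam.var k) 0
        = Lam.var 0 from rfl,
      show (Lam.up fun k => match k with | 0 => Lam.var 0 | k+1 => Lam.var k) 1
        = Lam.var 1 from rfl, ← churchBody_eq]
  have hb1 : Red (b0.subst0 (.var 0)) (.lam (churchBody n)) := by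
    have := hb0r.subst (fun k => match k with | 0 => Lam.var 0 | k+1 => Lam.var k)
    rwa [show ((Lam.lam (churchBody n)).subst fun k => match k with
      | 0 => Lam.var 0 | k+1 => Lam.var k) = (Lam.lam (churchBody n)).subst0 (.var 0) from rfl,
      e8] at this
  obtain ⟨b2, hb2, hb2r⟩ := red_lam_whs hb1
  have w5 : WHs (.app (.app (b0.subst0 (.var 0)) Fop) czero)
      (.app (.app (.lam b2) Fop) czero) := (hb2.appCong _).appCong _
  have w6 : WH (.app (.app (.lam b2) Fop) czero) (.app (b2.subst0 Fop) czero) :=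
    WH.app _ (WH.beta b2 Fop)
  have w7 : WHs (.app (b2.subst0 Fop) czero) (.app (.var 0) (succAdd n czero)) :=
    core n b2 czero _ hb2r rfl rfl
  rw [succAdd_czero] at w7
  exact (((((Relation.ReflTransGen.single w1).tail w2).trans w3).tail w4).trans w5).tail w6
    |>.trans w7

/-- `T₂ = λnλf(((n)f)F)0̲` is a storage operator for the integers. -/
theorem T2_is_storage : IsStorage T2 := by
  intro n
  refine ⟨succIter n, (red_succIter_church n).betaEq, ?_⟩
  intro θ hθ
  refine ⟨fun k => .var k, ?_⟩
  rw [Lam.subst_var]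
  exact (T2_machine (red_of_betaEq_church hθ)).hred
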